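/- Let E be a Riesz space, let p, q : ℕ → ℕ satisfy the deferred property, and let (x_n) be a sequence in E and x ∈ E. Then x_n →^{D_{st_o}}_{p,q} x holds if and only if there exists a sequence (y_n) in E such that δ_{p,q}({n ∈ ℕ : x_n = y_n}) = 1 and y_n →^{D_{st_o}}_{p,q} x. -/

import Mathlib

open Filter Topology

variable {E : Type*} [AddCommGroup E] [Lattice E]
  [CovariantClass E E (· + ·) (· ≤ ·)] [Module ℝ E] [PosSMulMono ℝ E]

/-- `p` and `q` satisfy the deferred property: `p n < q n` for all `n` and `q n → ∞`. -/
def DeferredProperty (p q : ℕ → ℕ) : Prop :=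
  (∀ n, p n < q n) ∧ Tendsto q atTop atTop

open Classical in
/-- The ratio `|{k ∈ K : p n < k ≤ q n}| / (q n - p n)`. -/
noncomputable def deferredRatio (p q : ℕ → ℕ) (K : Set ℕ) (n : ℕ) : ℝ :=
  (((Finset.Ioc (p n) (q n)).filter (fun k => k ∈ K)).card : ℝ) / ((q n : ℝ) - (p n : ℝ))

/-- The deferred density of `K ⊆ ℕ` is `a`. -/
def DeferredDensity (p q : ℕ → ℕ) (K : Set ℕ) (a : ℝ) : Prop :=
  Tendsto (deferredRatio p q K) atTop (nhds a)

/-- `z` is deferred statistical order decreasing to `0`: there is an (infinite) set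
`K = {k₁ < k₂ < ⋯}` of deferred density one along which `z` is decreasing with infimum `0`. -/
def DStatDecreasing (p q : ℕ → ℕ) (z : ℕ → E) : Prop :=
  ∃ K : Set ℕ, K.Infinite ∧ DeferredDensity p q K 1 ∧
    (∀ i ∈ K, ∀ j ∈ K, i ≤ j → z j ≤ z i) ∧ IsGLB (z '' K) 0

/-- `x` is deferred statistical order convergent to `l`. -/
def DStatOrderConv (p q : ℕ → ℕ) (x : ℕ → E) (l : E) : Prop :=
  ∃ z : ℕ → E, DStatDecreasing p q z ∧
    ∃ K : Set ℕ, K.Infinite ∧ DeferredDensity p q K 1 ∧ ∀ k ∈ K, |x k - l| ≤ z k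

open Classical in
lemma deferredRatio_card (p q : ℕ → ℕ) (h : ∀ n, p n < q n) (K : Set ℕ) (n : ℕ) :
    deferredRatio p q K n =
      (((Finset.Ioc (p n) (q n)).filter (fun k => k ∈ K)).card : ℝ)
        / ((Finset.Ioc (p n) (q n)).card : ℝ) := by
  have hc : ((Finset.Ioc (p n) (q n)).card : ℝ) = (q n : ℝ) - (p n : ℝ) := by
    rw [Nat.card_Ioc, Nat.cast_sub (h n).le]
  rw [deferredRatio, hc]

open Classical in
lemma denom_pos (p q : ℕ → ℕ) (h : ∀ n, p n < q n) (n : ℕ) :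
    (0:ℝ) < ((Finset.Ioc (p n) (q n)).card : ℝ) := by
  have : 0 < (Finset.Ioc (p n) (q n)).card := by
    have := h n; rw [Nat.card_Ioc]; omega
  exact_mod_cast this

open Classical in
lemma deferredRatio_le_one (p q : ℕ → ℕ) (h : ∀ n, p n < q n) (K : Set ℕ) (n : ℕ) :
    deferredRatio p q K n ≤ 1 := by
  rw [deferredRatio_card p q h, div_le_one (denom_pos p q h n)]
  exact_mod_cast Finset.card_le_card (Finset.filter_subset _ _)

open Classical in
lemma deferredRatio_inter_ge (p q : ℕ → ℕ) (h : ∀ n, p n < q n) (A B : Set ℕ) (n : ℕ) :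
    deferredRatio p q A n + deferredRatio p q B n - 1 ≤ deferredRatio p q (A ∩ B) n := by
  set s := Finset.Ioc (p n) (q n) with hs
  have hcard : (s.filter (fun k => k ∈ A)).card + (s.filter (fun k => k ∈ B)).card ≤
      s.card + (s.filter (fun k => k ∈ A ∩ B)).card := by
    have hu := Finset.card_union_add_card_inter (s.filter (fun k => k ∈ A))
      (s.filter (fun k => k ∈ B))
    have h1 : (s.filter (fun k => k ∈ A) ∪ s.filter (fun k => k ∈ B)).card ≤ s.card :=
      Finset.card_le_card (Finset.union_subset (Finset.filter_subset _ _)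
        (Finset.filter_subset _ _))
    have h2 : s.filter (fun k => k ∈ A) ∩ s.filter (fun k => k ∈ B) =
        s.filter (fun k => k ∈ A ∩ B) := by
      rw [← Finset.filter_and]
      rfl
    rw [h2] at hu
    omega
  have hd := denom_pos p q h n
  rw [deferredRatio_card p q h, deferredRatio_card p q h, deferredRatio_card p q h]
  rw [← add_div, show (1:ℝ) = (s.card : ℝ) / (s.card : ℝ) from (div_self hd.ne').symm,
    ← sub_div]
  gcongr
  have hc : ((s.filter (fun k => k ∈ A)).card : ℝ) + (s.filter (fun k => k ∈ B)).card ≤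
      (s.card : ℝ) + (s.filter (fun k => k ∈ A ∩ B)).card := by exact_mod_cast hcard
  simp only [← hs]
  have hgoal : ((s.filter (fun k => k ∈ A)).card : ℝ) + (s.filter (fun k => k ∈ B)).card
      - s.card ≤ ((s.filter (fun k => k ∈ A ∩ B)).card : ℝ) := by linarith
  convert hgoal using 4
  rfl

open Classical in
lemma deferredRatio_univ (p q : ℕ → ℕ) (h : ∀ n, p n < q n) (n : ℕ) :
    deferredRatio p q Set.univ n = 1 := by
  rw [deferredRatio_card p q h]
  rw [div_eq_one_iff_eq (denom_pos p q h n).ne']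
  norm_cast
  have hcf : ((Finset.Ioc (p n) (q n)).filter (fun k => k ∈ (Set.univ : Set ℕ))).card
      = (Finset.Ioc (p n) (q n)).card := by simp
  convert hcf using 3

lemma density_inter (p q : ℕ → ℕ) (h : ∀ n, p n < q n) {A B : Set ℕ}
    (hA : DeferredDensity p q A 1) (hB : DeferredDensity p q B 1) :
    DeferredDensity p q (A ∩ B) 1 := by
  have hg : Tendsto (fun n => deferredRatio p q A n + deferredRatio p q B n - 1)
      atTop (nhds 1) := by
    have := (hA.add hB).sub_const 1
    norm_num at this
    exact this
  exact tendsto_of_tendsto_of_tendsto_of_le_of_le hg tendsto_const_nhds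
    (fun n => deferredRatio_inter_ge p q h A B n)
    (fun n => deferredRatio_le_one p q h _ n)

lemma infinite_of_density_one (p q : ℕ → ℕ) (hpq : DeferredProperty p q) {K : Set ℕ}
    (hK : DeferredDensity p q K 1) : K.Infinite := by
  classical
  by_contra hfin
  rw [Set.not_infinite] at hfin
  obtain ⟨N, hN⟩ := hfin.bddAbove
  set C := hfin.toFinset.card with hC
  have hev1 : ∀ᶠ n in atTop, 1/2 < deferredRatio p q K n :=
    hK.eventually (eventually_gt_nhds (by norm_num))
  have hev2 : ∀ᶠ n in atTop, N + 2*C + 1 ≤ q n := hpq.2.eventually_ge_atTop _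
  obtain ⟨n, h1, h2⟩ := (hev1.and hev2).exists
  set s := Finset.Ioc (p n) (q n) with hs
  have hcC : (s.filter (fun k => k ∈ K)).card ≤ C := by
    apply Finset.card_le_card
    intro k hk
    rw [Set.Finite.mem_toFinset]
    exact (Finset.mem_filter.mp hk).2
  have hd := denom_pos p q hpq.1 n
  rw [deferredRatio_card p q hpq.1] at h1
  rw [lt_div_iff₀ hd] at h1
  have hpos : 0 < (s.filter (fun k => k ∈ K)).card := by
    rcases Nat.eq_zero_or_pos (s.filter (fun k => k ∈ K)).card with h0 | h0
    · rw [h0] at h1; norm_num at h1; linarith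
    · exact h0
  obtain ⟨k, hk⟩ := Finset.card_pos.mp hpos
  rw [Finset.mem_filter] at hk
  have hkN : k ≤ N := hN hk.2
  have hpk : p n < k := (Finset.mem_Ioc.mp hk.1).1
  have hfilt : (s.filter (fun k => k ∈ K)).card ≤ C := hcC
  have hlt : (s.card : ℝ) < 2 * C := by
    have : ((s.filter (fun k => k ∈ K)).card : ℝ) ≤ (C : ℝ) := by exact_mod_cast hfilt
    linarith
  have hltn : s.card < 2 * C := by exact_mod_cast hlt
  have hsc : s.card = q n - p n := Nat.card_Ioc _ _
  have := hpq.1 n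
  omega

theorem stmt4 (p q : ℕ → ℕ) (hpq : DeferredProperty p q) (x : ℕ → E) (l : E) :
    DStatOrderConv p q x l ↔
      ∃ y : ℕ → E, DeferredDensity p q {n | x n = y n} 1 ∧ DStatOrderConv p q y l := by
  constructor
  · intro h
    refine ⟨x, ?_, h⟩
    have huniv : {n | x n = x n} = Set.univ := by
      ext n; simp
    rw [huniv]
    unfold DeferredDensity
    have : ∀ n, deferredRatio p q Set.univ n = 1 := deferredRatio_univ p q hpq.1
    simpa [funext this] using tendsto_const_nhds
  · rintro ⟨y, hxy, z, hz, K, hKinf, hKd, hKle⟩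
    refine ⟨z, hz, K ∩ {n | x n = y n}, ?_, ?_, ?_⟩
    · exact infinite_of_density_one p q hpq (density_inter p q hpq.1 hKd hxy)
    · exact density_inter p q hpq.1 hKd hxy
    · rintro k ⟨hk1, hk2⟩
      rw [show x k = y k from hk2]
      exact hKle k hk1
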